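/- arXiv:1403.4669 — 2 statements merged into one kernel-verified Lean document; each statement's English description precedes it below -/
import Mathlib

section
/- Let a point be uniformly distributed in the region A' obtained by removing a closed disk of radius ε centered at the origin from a regular L-sided polygon inscribed in a circle of radius W centered at the origin (with ε < W_p, where W_p = W cos(π/L) is the apothem). Then the density of the distance R from the point to the origin is f_R(r) = 2πr/|A'| for ε ≤ r ≤ W_p, and f_R(r) = (2πr − 2Lr·arccos(W_p/r))/|A'| for W_p ≤ r ≤ W, where |A'| = (1/2)L W² sin(2π/L) − πε². -/
open MeasureTheory Real

/-- A regular L-sided polygon inscribed in a circle of radius W centered at the origin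
(intersection of L half-planes with apothem W cos(π/L)), with the closed disk of radius ε
around the origin removed. -/
def regPolyMinusDisk (L : ℕ) (W ε : ℝ) : Set (EuclideanSpace ℝ (Fin 2)) :=
  {x | (∀ k : Fin L,
          x 0 * Real.cos (2 * π * k / L) + x 1 * Real.sin (2 * π * k / L)
            ≤ W * Real.cos (π / L))
        ∧ ε < ‖x‖}

open Set
open scoped ENNReal


/-- The set of angles whose polygon constraints all hold with bound `t`. -/

theorem lintegral_comp_polarCoord_symm' (f : ℝ × ℝ → ℝ≥0∞) :
    ∫⁻ p, f p = ∫⁻ p in polarCoord.target, ENNReal.ofReal p.1 * f (polarCoord.symm p) := by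
  set B : ℝ × ℝ → ℝ × ℝ →L[ℝ] ℝ × ℝ := fun p =>
    LinearMap.toContinuousLinearMap (Matrix.toLin (Module.Basis.finTwoProd ℝ) (Module.Basis.finTwoProd ℝ)
      !![Real.cos p.2, -p.1 * Real.sin p.2; Real.sin p.2, p.1 * Real.cos p.2])
  have A : ∀ p ∈ polarCoord.target, HasFDerivWithinAt polarCoord.symm (B p) polarCoord.target p :=
    fun p _ => (hasFDerivAt_polarCoord_symm p).hasFDerivWithinAt
  have B_det : ∀ p, (B p).det = p.1 := by
    intro p
    conv_rhs => rw [← one_mul p.1, ← cos_sq_add_sin_sq p.2]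
    simp only [B, neg_mul, LinearMap.det_toContinuousLinearMap, LinearMap.det_toLin,
      Matrix.det_fin_two_of, sub_neg_eq_add]
    ring
  calc
    ∫⁻ p, f p = ∫⁻ p in polarCoord.source, f p := by
      rw [← setLIntegral_univ]
      exact (setLIntegral_congr polarCoord_source_ae_eq_univ).symm
    _ = ∫⁻ p in polarCoord.symm '' polarCoord.target, f p := by
      rw [polarCoord.symm_image_target_eq_source]
    _ = ∫⁻ p in polarCoord.target, ENNReal.ofReal |(B p).det| * f (polarCoord.symm p) := by
      exact lintegral_image_eq_lintegral_abs_det_fderiv_mul volume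
        polarCoord.open_target.measurableSet A polarCoord.symm.injOn f
    _ = ∫⁻ p in polarCoord.target, ENNReal.ofReal p.1 * f (polarCoord.symm p) := by
      refine setLIntegral_congr_fun polarCoord.open_target.measurableSet
        (fun x hx => ?_)
      rw [B_det, abs_of_pos hx.1]

def Ang (L : ℕ) (t : ℝ) : Set ℝ := {φ | ∀ k : Fin L, Real.cos (φ - 2 * π * k / L) ≤ t}

lemma measurableSet_Ang (L : ℕ) (t : ℝ) : MeasurableSet (Ang L t) := by
  have : Ang L t = ⋂ k : Fin L, {φ : ℝ | Real.cos (φ - 2 * π * k / L) ≤ t} := by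
    ext φ; simp [Ang]
  rw [this]
  exact MeasurableSet.iInter fun k =>
    measurableSet_le (Real.continuous_cos.comp (by continuity)).measurable measurable_const

lemma Ang_shift {L : ℕ} (hL : 0 < L) {t : ℝ} {φ : ℝ} (h : φ ∈ Ang L t) (m : ℤ) :
    φ + 2 * π * m / L ∈ Ang L t := by
  intro k
  have hL0 : (L : ℝ) ≠ 0 := Nat.cast_ne_zero.mpr hL.ne'
  set j : ℤ := ((k : ℤ) - m) % L with hj
  have hLZ : (0 : ℤ) < (L : ℤ) := by exact_mod_cast hL
  have hj0 : 0 ≤ j := Int.emod_nonneg _ hLZ.ne'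
  have hjL : j < L := Int.emod_lt_of_pos _ hLZ
  set q : ℤ := ((k : ℤ) - m) / L with hq
  have hdiv : (k : ℤ) - m = L * q + j := (Int.mul_ediv_add_emod _ _).symm
  have hk' : j.toNat < L := by omega
  have key : φ + 2 * π * m / L - 2 * π * k / L
      = (φ - 2 * π * (j.toNat : ℕ) / L) + ((-q : ℤ) : ℝ) * (2 * π) := by
    have hj' : ((j.toNat : ℕ) : ℝ) = (j : ℝ) := by
      exact_mod_cast congrArg (Int.cast : ℤ → ℝ) (Int.toNat_of_nonneg hj0)
    have h2 : ((k : ℕ) : ℝ) - (m : ℝ) = (L : ℝ) * (q : ℝ) + (j : ℝ) := by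
      exact_mod_cast congrArg (Int.cast : ℤ → ℝ) hdiv
    rw [hj']
    push_cast
    field_simp
    linear_combination (-(2 * π)) * h2
  rw [key, Real.cos_add_int_mul_two_pi]
  exact h ⟨j.toNat, hk'⟩

lemma Ang_shift_iff {L : ℕ} (hL : 0 < L) {t : ℝ} {φ : ℝ} (m : ℤ) :
    φ + 2 * π * m / L ∈ Ang L t ↔ φ ∈ Ang L t := by
  constructor
  · intro h
    have := Ang_shift hL h (-m)
    have h3 : φ + 2 * π * m / L + 2 * π * ((-m : ℤ) : ℝ) / L = φ := by push_cast; ring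
    rwa [h3] at this
  · intro h
    exact Ang_shift hL h m

lemma arccos_anti {x y : ℝ} (h : x ≤ y) : Real.arccos y ≤ Real.arccos x := by
  unfold Real.arccos
  have := Real.monotone_arcsin h
  linarith

lemma cos_off_sector {L : ℕ} (hL : 3 ≤ L) {φ : ℝ} (hφ : φ ∈ Ioc (-(π/L)) (π/L))
    {j : Fin L} (hj : (j:ℕ) ≠ 0) : Real.cos (φ - 2*π*j/L) ≤ Real.cos (π/L) := by
  have hLpos : (0:ℝ) < L := by positivity
  set u : ℝ := π / L with hu0
  have hu : (L:ℝ) * u = π := by rw [hu0]; field_simp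
  have hπL : 0 < u := div_pos pi_pos hLpos
  have hj1 : (1:ℝ) ≤ ((j:ℕ):ℝ) := by exact_mod_cast Nat.one_le_iff_ne_zero.mpr hj
  have hjL : ((j:ℕ):ℝ) ≤ (L:ℝ) - 1 := by
    have : ((j:ℕ):ℝ) < (L:ℝ) := by exact_mod_cast j.isLt
    have h3 : (3:ℝ) ≤ (L:ℝ) := by exact_mod_cast hL
    have : (j:ℕ) + 1 ≤ L := j.isLt
    have h4 : ((j:ℕ):ℝ) + 1 ≤ (L:ℝ) := by exact_mod_cast j.isLt
    linarith
  set x := 2*π*(j:ℕ)/L - φ with hx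
  have hxu : x = 2*u*(j:ℕ) - φ := by rw [hx, hu0]; ring
  have hcos : Real.cos (φ - 2*π*(j:ℕ)/L) = Real.cos x := by
    rw [hx, ← Real.cos_neg]; ring_nf
  have hL3 : (3:ℝ) ≤ (L:ℝ) := by exact_mod_cast hL
  have hx1 : u ≤ x := by
    rw [hxu]
    nlinarith [hφ.2, mul_nonneg hπL.le (by linarith : (0:ℝ) ≤ ((j:ℕ):ℝ) - 1)]
  have hx2 : x ≤ 2*π - u := by
    rw [hxu]
    nlinarith [hφ.1, mul_nonneg hπL.le (by linarith : (0:ℝ) ≤ (L:ℝ) - 1 - ((j:ℕ):ℝ))]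
  rw [hcos]
  rcases le_or_gt x π with hxπ | hxπ
  · exact Real.cos_le_cos_of_nonneg_of_le_pi hπL.le hxπ hx1
  · rw [← Real.cos_two_pi_sub]
    apply Real.cos_le_cos_of_nonneg_of_le_pi hπL.le (by linarith)
    linarith

lemma pi_div_le_pi {L : ℕ} (hL : 3 ≤ L) : π / (L:ℝ) ≤ π := by
  have hLpos : (0:ℝ) < L := by positivity
  have hL3 : (3:ℝ) ≤ (L:ℝ) := by exact_mod_cast hL
  rw [div_le_iff₀ hLpos]
  nlinarith [pi_pos]

lemma Ang_inter_sector {L : ℕ} (hL : 3 ≤ L) {t : ℝ} (ht : Real.cos (π/L) ≤ t) :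
    Ang L t ∩ Ioc (-(π/L)) (π/L)
      = Ioc (-(π/L)) (π/L) \ Ioo (-(Real.arccos t)) (Real.arccos t) := by
  have hLpos : (0:ℝ) < L := by positivity
  have hπL : 0 < π / (L:ℝ) := div_pos pi_pos hLpos
  have hπLπ : π / (L:ℝ) ≤ π := pi_div_le_pi hL
  have ht1 : -1 ≤ t := (Real.neg_one_le_cos (π/L)).trans ht
  have hβπL : Real.arccos t ≤ π / L := by
    have := arccos_anti ht
    rwa [Real.arccos_cos hπL.le hπLπ] at this
  ext φ
  simp only [mem_inter_iff, mem_diff, mem_Ioc, mem_Ioo, Ang, mem_setOf_eq]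
  constructor
  · rintro ⟨hA, hφ⟩
    refine ⟨hφ, fun hβ => ?_⟩
    have h0 : Real.cos φ ≤ t := by simpa using hA ⟨0, by omega⟩
    have habs : |φ| < Real.arccos t := abs_lt.mpr ⟨hβ.1, hβ.2⟩
    have hβpos : 0 < Real.arccos t := (abs_nonneg φ).trans_lt habs
    have htlt : t < 1 := Real.arccos_pos.mp hβpos
    have hcosβ : Real.cos (Real.arccos t) = t := Real.cos_arccos ht1 htlt.le
    have : Real.cos (Real.arccos t) < Real.cos |φ| :=
      Real.cos_lt_cos_of_nonneg_of_le_pi (abs_nonneg φ) (Real.arccos_le_pi t) habs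
    rw [hcosβ, Real.cos_abs] at this
    linarith
  · rintro ⟨hφ, hβ⟩
    refine ⟨fun k => ?_, hφ⟩
    rcases Nat.eq_zero_or_pos (k:ℕ) with hk | hk
    · have hk' : (((k:ℕ)):ℝ) = 0 := by rw [hk]; norm_num
      rw [show φ - 2*π*(k:ℕ)/L = φ by rw [hk']; ring]
      have habs : Real.arccos t ≤ |φ| := by
        rcases le_or_gt (Real.arccos t) φ with h | h
        · exact h.trans (le_abs_self φ)
        · have h2 : φ ≤ -(Real.arccos t) := by
            by_contra hc
            exact hβ ⟨lt_of_not_ge hc, h⟩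
          calc Real.arccos t ≤ -φ := by linarith
          _ ≤ |φ| := neg_le_abs φ
      rw [← Real.cos_abs]
      rcases le_or_gt t 1 with ht2 | ht2
      · have h2 : Real.cos |φ| ≤ Real.cos (Real.arccos t) :=
          Real.cos_le_cos_of_nonneg_of_le_pi (Real.arccos_nonneg t)
            ((abs_le.mpr ⟨by linarith [hφ.1], hφ.2⟩).trans hπLπ) habs
        rwa [Real.cos_arccos ht1 ht2] at h2
      · exact (Real.cos_le_one _).trans ht2.le
    · exact (cos_off_sector hL hφ (Nat.pos_iff_ne_zero.mp hk)).trans ht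

lemma Ang_empty {L : ℕ} (hL : 3 ≤ L) {t : ℝ} (ht : t < Real.cos (π/L)) :
    Ang L t = ∅ := by
  have hLpos : (0:ℝ) < L := by positivity
  ext φ
  simp only [mem_empty_iff_false, iff_false]
  intro hA
  set n : ℤ := round (φ * L / (2*π)) with hn
  have hshift := Ang_shift (by omega : 0 < L) hA (-n)
  have h0 : Real.cos ((φ + 2*π*((-n:ℤ):ℝ)/L) - 2*π*((0:ℕ):ℝ)/L) ≤ t := by
    have := hshift ⟨0, by omega⟩
    simpa using this
  have heq : (φ + 2*π*((-n:ℤ):ℝ)/L) - 2*π*((0:ℕ):ℝ)/L = φ - 2*π*n/L := by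
    push_cast; ring
  rw [heq] at h0
  have habs : |φ - 2*π*n/L| ≤ π/L := by
    have h1 : |φ * L / (2*π) - n| ≤ 1/2 := abs_sub_round _
    have h2 : φ - 2*π*n/L = (2*π/L) * (φ * L / (2*π) - n) := by
      field_simp
    rw [h2, abs_mul, abs_of_pos (by positivity : (0:ℝ) < 2*π/L)]
    calc 2*π/L * |φ * L / (2*π) - n| ≤ 2*π/L * (1/2) :=
          mul_le_mul_of_nonneg_left h1 (by positivity)
    _ = π/L := by ring
  have hcos : Real.cos (π/L) ≤ Real.cos (φ - 2*π*n/L) := by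
    rw [← Real.cos_abs (φ - 2*π*n/L)]
    exact Real.cos_le_cos_of_nonneg_of_le_pi (abs_nonneg _) (pi_div_le_pi hL) habs
  linarith

lemma Ang_shift_measure {L : ℕ} (hL : 0 < L) (t : ℝ) (m : ℤ) (a b : ℝ) :
    volume (Ang L t ∩ Ioc (a + 2*π*m/L) (b + 2*π*m/L)) = volume (Ang L t ∩ Ioc a b) := by
  have hset : Ang L t ∩ Ioc (a + 2*π*m/L) (b + 2*π*m/L)
      = (fun φ => φ + (-(2*π*m/L))) ⁻¹' (Ang L t ∩ Ioc a b) := by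
    ext φ
    simp only [mem_inter_iff, mem_Ioc, mem_preimage]
    constructor
    · rintro ⟨hA, h1, h2⟩
      refine ⟨?_, by linarith, by linarith⟩
      have := Ang_shift hL hA (-m)
      have heq : φ + 2*π*((-m:ℤ):ℝ)/L = φ + -(2*π*m/L) := by push_cast; ring
      rwa [heq] at this
    · rintro ⟨hA, h1, h2⟩
      refine ⟨?_, by linarith, by linarith⟩
      have := Ang_shift hL hA m
      have heq : (φ + -(2*π*m/L)) + 2*π*(m:ℝ)/L = φ := by ring
      rwa [heq] at this
  rw [hset, measure_preimage_add_right]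

lemma Ang_sector_sum {L : ℕ} (hL : 0 < L) (t : ℝ) (n : ℕ) :
    volume (Ang L t ∩ Ioc (-(π/L)) (-(π/L) + 2*π*n/L))
      = n * volume (Ang L t ∩ Ioc (-(π/L)) (π/L)) := by
  have hLpos : (0:ℝ) < L := by positivity
  induction n with
  | zero =>
    have : -(π/(L:ℝ)) + 2*π*(0:ℕ)/L = -(π/L) := by norm_num
    rw [this, Set.Ioc_self, Set.inter_empty, measure_empty]
    simp
  | succ n ih =>
    have h1 : -(π/(L:ℝ)) ≤ -(π/L) + 2*π*n/L := by
      have : (0:ℝ) ≤ 2*π*n/L := by positivity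
      linarith
    have h2 : -(π/(L:ℝ)) + 2*π*n/L ≤ -(π/L) + 2*π*(n+1:ℕ)/L := by
      have : (2*π*(n:ℝ))/L ≤ 2*π*((n:ℝ)+1)/L := by
        apply div_le_div_of_nonneg_right ?_ hLpos.le
        nlinarith [pi_pos]
      push_cast
      linarith
    have hsplit : Ioc (-(π/(L:ℝ))) (-(π/L) + 2*π*(n+1:ℕ)/L)
        = Ioc (-(π/L)) (-(π/L) + 2*π*n/L)
          ∪ Ioc (-(π/L) + 2*π*n/L) (-(π/L) + 2*π*(n+1:ℕ)/L) :=
      (Set.Ioc_union_Ioc_eq_Ioc h1 h2).symm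
    have hdisj : Disjoint
        (Ang L t ∩ Ioc (-(π/(L:ℝ))) (-(π/L) + 2*π*n/L))
        (Ang L t ∩ Ioc (-(π/L) + 2*π*n/L) (-(π/L) + 2*π*(n+1:ℕ)/L)) := by
      rw [Set.disjoint_left]
      rintro x ⟨_, _, hx2⟩ ⟨_, hx3, _⟩
      linarith
    have hshift : volume (Ang L t ∩ Ioc (-(π/(L:ℝ)) + 2*π*n/L) (-(π/L) + 2*π*(n+1:ℕ)/L))
        = volume (Ang L t ∩ Ioc (-(π/L)) (π/L)) := by
      have heq2 : -(π/(L:ℝ)) + 2*π*(n+1:ℕ)/L = (π/L) + 2*π*((n:ℤ):ℝ)/L := by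
        push_cast; field_simp; ring
      have heq1 : -(π/(L:ℝ)) + 2*π*(n:ℕ)/L = -(π/L) + 2*π*((n:ℤ):ℝ)/L := by
        push_cast; ring
      rw [heq1, heq2, Ang_shift_measure hL t n]
    rw [hsplit, Set.inter_union_distrib_left,
      measure_union hdisj ((measurableSet_Ang L t).inter measurableSet_Ioc), ih, hshift]
    push_cast
    ring

lemma Ang_measure {L : ℕ} (hL : 3 ≤ L) {t : ℝ} (ht : Real.cos (π/L) ≤ t) :
    volume (Ang L t ∩ Ioc (-π) π) = ENNReal.ofReal (2*π - 2*L*Real.arccos t) := by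
  have hL0 : 0 < L := by omega
  have hLpos : (0:ℝ) < L := by positivity
  have hπL : 0 < π / (L:ℝ) := div_pos pi_pos hLpos
  have hπLπ : π / (L:ℝ) ≤ π := pi_div_le_pi hL
  have hβ0 : 0 ≤ Real.arccos t := Real.arccos_nonneg t
  have hβπL : Real.arccos t ≤ π / L := by
    have := arccos_anti ht
    rwa [Real.arccos_cos hπL.le hπLπ] at this
  set A := Ang L t
  have hmA : MeasurableSet A := measurableSet_Ang L t
  -- step 1 : measure over Ioc (-π) π equals measure over Ioc (-π/L) (2π - π/L)
  have hsplit1 : Ioc (-π) π = Ioc (-π) (-(π/(L:ℝ))) ∪ Ioc (-(π/L)) π :=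
    (Set.Ioc_union_Ioc_eq_Ioc (by linarith) (by linarith)).symm
  have hsplit2 : Ioc (-(π/(L:ℝ))) (2*π - π/L) = Ioc (-(π/L)) π ∪ Ioc π (2*π - π/L) :=
    (Set.Ioc_union_Ioc_eq_Ioc (by linarith) (by linarith)).symm
  have hd1 : Disjoint (A ∩ Ioc (-π) (-(π/(L:ℝ)))) (A ∩ Ioc (-(π/L)) π) := by
    rw [Set.disjoint_left]; rintro x ⟨_, _, h2⟩ ⟨_, h3, _⟩; linarith
  have hd2 : Disjoint (A ∩ Ioc (-(π/(L:ℝ))) π) (A ∩ Ioc π (2*π - π/L)) := by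
    rw [Set.disjoint_left]; rintro x ⟨_, _, h2⟩ ⟨_, h3, _⟩; linarith
  have hshiftL : volume (A ∩ Ioc π (2*π - π/(L:ℝ))) = volume (A ∩ Ioc (-π) (-(π/L))) := by
    have h := Ang_shift_measure hL0 t L (-π) (-(π/L))
    rw [show -π + 2*π*((L:ℤ):ℝ)/L = π by push_cast; field_simp; ring,
      show -(π/(L:ℝ)) + 2*π*((L:ℤ):ℝ)/L = 2*π - π/L by push_cast; field_simp; ring] at h
    exact h
  have hstep1 : volume (A ∩ Ioc (-π) π) = volume (A ∩ Ioc (-(π/(L:ℝ))) (2*π - π/L)) := by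
    rw [hsplit1, hsplit2, Set.inter_union_distrib_left, Set.inter_union_distrib_left,
      measure_union hd1 (hmA.inter measurableSet_Ioc),
      measure_union hd2 (hmA.inter measurableSet_Ioc), hshiftL]
    ring
  -- step 2 : sector decomposition
  have hstep2 : volume (A ∩ Ioc (-(π/(L:ℝ))) (2*π - π/L))
      = L * volume (A ∩ Ioc (-(π/L)) (π/L)) := by
    have heq : 2*π - π/(L:ℝ) = -(π/L) + 2*π*(L:ℕ)/L := by field_simp; ring
    rw [heq]
    exact Ang_sector_sum hL0 t L
  -- step 3 : sector measure
  have hsector : volume (A ∩ Ioc (-(π/(L:ℝ))) (π/L))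
      = ENNReal.ofReal (2*(π/L) - 2*Real.arccos t) := by
    rw [Ang_inter_sector hL ht]
    have hsub : Ioo (-(Real.arccos t)) (Real.arccos t) ⊆ Ioc (-(π/(L:ℝ))) (π/L) := by
      intro x hx
      exact ⟨by linarith [hx.1], by linarith [hx.2]⟩
    rw [measure_diff hsub measurableSet_Ioo.nullMeasurableSet (by
      rw [Real.volume_Ioo]; exact ENNReal.ofReal_ne_top),
      Real.volume_Ioc, Real.volume_Ioo]
    rw [← ENNReal.ofReal_sub _ (by linarith)]
    congr 1
    ring
  rw [hstep1, hstep2, hsector]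
  rw [show ((L:ℕ):ℝ≥0∞) = ENNReal.ofReal ((L:ℕ):ℝ) by simp,
    ← ENNReal.ofReal_mul (by positivity)]
  congr 1
  field_simp

/-- radial density numerator -/
noncomputable def gfun (L : ℕ) (W ε : ℝ) (r : ℝ) : ℝ :=
  if ε < r ∧ r ≤ W then r * (2*π - 2*L*Real.arccos (W * Real.cos (π/L) / r)) else 0

lemma measurable_gfun (L : ℕ) (W ε : ℝ) : Measurable (gfun L W ε) := by
  unfold gfun
  apply Measurable.ite
  · exact (measurableSet_lt measurable_const measurable_id).inter
      (measurableSet_le measurable_id measurable_const)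
  · apply Measurable.mul measurable_id
    apply Measurable.sub measurable_const
    apply Measurable.const_mul
    exact Real.continuous_arccos.measurable.comp (measurable_const.div measurable_id)
  · exact measurable_const

theorem core_polar (L : ℕ) (hL : 3 ≤ L) (W ε : ℝ) (hW : 0 < W) (hε : 0 < ε)
    (hεc : ε < W * Real.cos (π/L)) (S : Set ℝ) (hS : MeasurableSet S) :
    volume {p : ℝ × ℝ | Real.sqrt (p.1^2 + p.2^2) ∈ S
        ∧ (∀ k : Fin L, p.1 * Real.cos (2*π*k/L) + p.2 * Real.sin (2*π*k/L)
            ≤ W * Real.cos (π/L))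
        ∧ ε < Real.sqrt (p.1^2 + p.2^2)}
      = ∫⁻ r in S, ENNReal.ofReal (gfun L W ε r) := by
  classical
  have hLpos : (0:ℝ) < L := by positivity
  have hcosLpos : 0 < Real.cos (π/L) := by
    apply Real.cos_pos_of_mem_Ioo
    constructor
    · have h1 := div_pos pi_pos hLpos
      linarith [pi_pos]
    · have h3 : (3:ℝ) ≤ (L:ℝ) := by exact_mod_cast hL
      rw [div_lt_iff₀ hLpos]
      nlinarith [pi_pos]
  set c : ℝ := W * Real.cos (π/L) with hc
  have hc0 : 0 < c := by positivity
  set N : ℝ × ℝ → ℝ := fun p => Real.sqrt (p.1^2 + p.2^2) with hN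
  have hNmeas : Measurable N := (continuous_fst.pow 2 |>.add (continuous_snd.pow 2)).sqrt.measurable
  set E : Set (ℝ × ℝ) := {p | N p ∈ S
      ∧ (∀ k : Fin L, p.1 * Real.cos (2*π*k/L) + p.2 * Real.sin (2*π*k/L) ≤ c)
      ∧ ε < N p} with hE
  have hEmeas : MeasurableSet E := by
    have h1 : MeasurableSet {p : ℝ × ℝ | N p ∈ S} := hNmeas hS
    have h2 : MeasurableSet {p : ℝ × ℝ |
        ∀ k : Fin L, p.1 * Real.cos (2*π*k/L) + p.2 * Real.sin (2*π*k/L) ≤ c} := by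
      rw [Set.setOf_forall]
      refine MeasurableSet.iInter fun k => ?_
      exact measurableSet_le (by fun_prop) measurable_const
    have h3 : MeasurableSet {p : ℝ × ℝ | ε < N p} := measurableSet_lt measurable_const hNmeas
    have hdec : E = {p : ℝ × ℝ | N p ∈ S} ∩ ({p : ℝ × ℝ |
        ∀ k : Fin L, p.1 * Real.cos (2*π*k/L) + p.2 * Real.sin (2*π*k/L) ≤ c}
          ∩ {p : ℝ × ℝ | ε < N p}) := by
      ext p
      simp only [hE, mem_setOf_eq, mem_inter_iff]
      try tauto
    rw [hdec]
    exact h1.inter (h2.inter h3)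
  have key : volume E = ∫⁻ p, E.indicator 1 p := by
    rw [lintegral_indicator_one hEmeas]
  rw [key, lintegral_comp_polarCoord_symm']
  have htarget : polarCoord.target = Ioi (0:ℝ) ×ˢ Ioo (-π) π := rfl
  have hsymm : ∀ p : ℝ × ℝ, polarCoord.symm p = (p.1 * Real.cos p.2, p.1 * Real.sin p.2) :=
    fun p => rfl
  simp only [htarget, hsymm]
  rw [Measure.volume_eq_prod, ← Measure.prod_restrict,
    lintegral_prod _ (by
      apply Measurable.aemeasurable
      apply Measurable.mul
      · exact ENNReal.measurable_ofReal.comp measurable_fst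
      · exact (measurable_const.indicator hEmeas).comp
          ((measurable_fst.mul (Real.continuous_cos.measurable.comp measurable_snd)).prodMk
            (measurable_fst.mul (Real.continuous_sin.measurable.comp measurable_snd))))]
  -- now a double integral
  have hinner : ∀ r ∈ Ioi (0:ℝ),
      (∫⁻ φ in Ioo (-π) π, ENNReal.ofReal (r, φ).1
          * E.indicator 1 ((r, φ).1 * Real.cos (r, φ).2, (r, φ).1 * Real.sin (r, φ).2))
        = S.indicator (fun r => ENNReal.ofReal (gfun L W ε r)) r := by
    intro r hr
    have hr0 : 0 < r := hr
    have hNr : ∀ φ : ℝ, N (r * Real.cos φ, r * Real.sin φ) = r := by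
      intro φ
      have h1 : (r * Real.cos φ)^2 + (r * Real.sin φ)^2 = r^2 := by
        have := Real.sin_sq_add_cos_sq φ
        nlinarith
      rw [hN]
      simp only
      rw [h1, Real.sqrt_sq hr0.le]
    have hKset : {φ : ℝ | (r * Real.cos φ, r * Real.sin φ) ∈ E}
        = if r ∈ S ∧ ε < r then Ang L (c/r) else ∅ := by
      split_ifs with hcond
      · ext φ
        simp only [hE, mem_setOf_eq, hNr, Ang]
        constructor
        · rintro ⟨_, hpoly, _⟩ k
          have := hpoly k
          rw [Real.cos_sub, le_div_iff₀ hr0]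
          nlinarith [this]
        · intro hA
          refine ⟨hcond.1, fun k => ?_, hcond.2⟩
          have := hA k
          rw [Real.cos_sub, le_div_iff₀ hr0] at this
          nlinarith [this]
      · ext φ
        simp only [hE, mem_setOf_eq, hNr, mem_empty_iff_false, iff_false]
        rintro ⟨h1, _, h3⟩
        exact hcond ⟨h1, h3⟩
    calc (∫⁻ φ in Ioo (-π) π, ENNReal.ofReal r
          * E.indicator 1 (r * Real.cos φ, r * Real.sin φ))
        = ENNReal.ofReal r * ∫⁻ φ in Ioo (-π) π,
            E.indicator 1 (r * Real.cos φ, r * Real.sin φ) := by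
          rw [lintegral_const_mul]
          exact (measurable_const.indicator hEmeas).comp
            ((Real.continuous_cos.measurable.const_mul r).prodMk
              (Real.continuous_sin.measurable.const_mul r))
      _ = ENNReal.ofReal r * ∫⁻ φ in Ioo (-π) π,
            ({φ : ℝ | (r * Real.cos φ, r * Real.sin φ) ∈ E}).indicator 1 φ := by
          congr 1
      _ = S.indicator (fun r => ENNReal.ofReal (gfun L W ε r)) r := by
          rw [hKset]
          split_ifs with hcond
          · -- r ∈ S and ε < r
            have hmA : MeasurableSet (Ang L (c/r)) := measurableSet_Ang L (c/r)
            rw [lintegral_indicator_one hmA, Measure.restrict_apply hmA]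
            have hIoo : volume (Ang L (c/r) ∩ Ioo (-π) π)
                = volume (Ang L (c/r) ∩ Ioc (-π) π) := by
              apply measure_congr
              exact (Filter.EventuallyEq.refl _ _).inter Ioo_ae_eq_Ioc
            rw [hIoo]
            rcases le_or_gt r W with hrW | hrW
            · have ht : Real.cos (π/L) ≤ c/r := by
                rw [le_div_iff₀ hr0, hc]
                nlinarith
              rw [Ang_measure hL ht, Set.indicator_of_mem hcond.1, gfun,
                if_pos ⟨hcond.2, hrW⟩, ← ENNReal.ofReal_mul hr0.le]
            · have ht : c/r < Real.cos (π/L) := by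
                rw [div_lt_iff₀ hr0, hc]
                nlinarith
              rw [Ang_empty hL ht, Set.empty_inter, measure_empty, mul_zero,
                Set.indicator_of_mem hcond.1, gfun, if_neg (by push_neg; intro; linarith),
                ENNReal.ofReal_zero]
          · rw [Set.indicator_empty]
            simp only [lintegral_const, zero_mul, mul_zero]
            rcases Classical.em (r ∈ S) with hrS | hrS
            · rw [Set.indicator_of_mem hrS, gfun, if_neg (fun hc2 => hcond ⟨hrS, hc2.1⟩),
                ENNReal.ofReal_zero]
            · rw [Set.indicator_of_notMem hrS]
  rw [setLIntegral_congr_fun measurableSet_Ioi hinner]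
  -- now reduce ∫⁻ r in Ioi 0, S.indicator ... to ∫⁻ r in S
  rw [lintegral_indicator hS, Measure.restrict_restrict hS]
  have hzero : ∫⁻ r in S \ Ioi (0:ℝ), ENNReal.ofReal (gfun L W ε r) = 0 := by
    rw [setLIntegral_congr_fun (hS.diff measurableSet_Ioi)
      (fun r hr => ?_), lintegral_zero]
    have : ¬ ε < r := fun h => hr.2 (lt_trans hε h)
    rw [gfun, if_neg (fun h2 => this h2.1), ENNReal.ofReal_zero]
  rw [← lintegral_inter_add_diff (f := fun r => ENNReal.ofReal (gfun L W ε r)) S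
    measurableSet_Ioi, hzero, add_zero]

theorem area_int (L : ℕ) (hL : 3 ≤ L) (W ε : ℝ) (hW : 0 < W) (hε : 0 < ε)
    (hεc : ε < W * Real.cos (π/L)) :
    ∫⁻ r, ENNReal.ofReal (gfun L W ε r)
      = ENNReal.ofReal (1/2 * L * W^2 * Real.sin (2*π/L) - π * ε^2) := by
  have hLpos : (0:ℝ) < L := by positivity
  have hL3 : (3:ℝ) ≤ (L:ℝ) := by exact_mod_cast hL
  have hπL : 0 < π / (L:ℝ) := div_pos pi_pos hLpos
  have hcosLpos : 0 < Real.cos (π/L) := by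
    apply Real.cos_pos_of_mem_Ioo
    constructor
    · linarith [pi_pos]
    · rw [div_lt_iff₀ hLpos]; nlinarith [pi_pos]
  set c : ℝ := W * Real.cos (π/L) with hc
  have hc0 : 0 < c := by positivity
  have hcW : c < W := by
    have h1 : Real.cos (π/L) < 1 := by
      have := Real.cos_lt_cos_of_nonneg_of_le_pi le_rfl (pi_div_le_pi hL) hπL
      rwa [Real.cos_zero] at this
    nlinarith
  have hεW : ε < W := hεc.trans hcW
  set h : ℝ → ℝ := fun r => r * (2*π - 2*L*Real.arccos (c/r)) with hh
  -- step 1: restrict the lintegral to Ioc ε W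
  have hind : (fun r => ENNReal.ofReal (gfun L W ε r))
      = (Ioc ε W).indicator (fun r => ENNReal.ofReal (gfun L W ε r)) := by
    funext r
    by_cases hr : r ∈ Ioc ε W
    · rw [Set.indicator_of_mem hr]
    · rw [Set.indicator_of_notMem hr, gfun, if_neg, ENNReal.ofReal_zero]
      intro hcond
      exact hr ⟨hcond.1, hcond.2⟩
  rw [hind, lintegral_indicator measurableSet_Ioc]
  have hgf : ∀ r ∈ Ioc ε W, ENNReal.ofReal (gfun L W ε r) = ENNReal.ofReal (h r) := by
    intro r hr
    rw [gfun, if_pos ⟨hr.1, hr.2⟩]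
  rw [setLIntegral_congr_fun measurableSet_Ioc hgf]
  -- step 2: continuity and integrability of h
  have hcontOn : ∀ a b : ℝ, ε ≤ a → ContinuousOn h (Icc a b) ∨ True := fun _ _ _ => Or.inr trivial
  have hcont : ContinuousOn h (Icc ε W) := by
    apply ContinuousOn.mul continuousOn_id
    apply ContinuousOn.sub continuousOn_const
    apply ContinuousOn.mul continuousOn_const
    exact Real.continuous_arccos.comp_continuousOn
      (continuousOn_const.div continuousOn_id (fun x hx => (hε.trans_le hx.1).ne'))
  have hint : IntegrableOn h (Ioc ε W) volume :=
    (hcont.integrableOn_Icc).mono_set Ioc_subset_Icc_self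
  have hnonneg : 0 ≤ᵐ[volume.restrict (Ioc ε W)] h := by
    rw [Filter.EventuallyLE, ae_restrict_iff' measurableSet_Ioc]
    apply Filter.Eventually.of_forall
    intro r hr
    simp only [Pi.zero_apply]
    have hr0 : 0 < r := hε.trans hr.1
    have hβ : Real.arccos (c/r) ≤ π/L := by
      have h1 : Real.cos (π/L) ≤ c/r := by
        rw [le_div_iff₀ hr0, hc]; nlinarith [hr.2]
      have := arccos_anti h1
      rwa [Real.arccos_cos hπL.le (pi_div_le_pi hL)] at this
    have hLπ : (L:ℝ)*(π/L) = π := by field_simp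
    have : 0 ≤ 2*π - 2*(L:ℝ)*Real.arccos (c/r) := by
      nlinarith [mul_le_mul_of_nonneg_left hβ (by positivity : (0:ℝ) ≤ 2*(L:ℝ))]
    rw [hh]
    positivity
  rw [← ofReal_integral_eq_lintegral_ofReal hint hnonneg]
  congr 1
  -- step 3: compute the integral
  rw [← intervalIntegral.integral_of_le hεW.le]
  have hii1 : IntervalIntegrable h volume ε c := by
    apply ContinuousOn.intervalIntegrable
    apply hcont.mono
    rw [Set.uIcc_of_le hεc.le]
    exact Icc_subset_Icc le_rfl hcW.le
  have hii2 : IntervalIntegrable h volume c W := by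
    apply ContinuousOn.intervalIntegrable
    apply hcont.mono
    rw [Set.uIcc_of_le hcW.le]
    exact Icc_subset_Icc hεc.le le_rfl
  rw [← intervalIntegral.integral_add_adjacent_intervals hii1 hii2]
  -- step 3a: on [ε, c] the integrand is 2πr
  have hpart1 : ∫ r in ε..c, h r = π * c^2 - π * ε^2 := by
    have heq : Set.EqOn h (fun r => 2*π*r) (Set.uIcc ε c) := by
      intro r hr
      rw [Set.uIcc_of_le hεc.le] at hr
      have hr0 : 0 < r := hε.trans_le hr.1
      have h1 : (1:ℝ) ≤ c/r := by rw [le_div_iff₀ hr0]; nlinarith [hr.2]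
      rw [hh]
      simp only
      rw [Real.arccos_eq_zero.mpr h1]
      ring
    rw [intervalIntegral.integral_congr heq]
    have : ∫ r in ε..c, 2*π*r = 2*π*∫ r in ε..c, r := intervalIntegral.integral_const_mul _ _
    rw [this, integral_id]
    ring
  -- step 3b: FTC on [c, W]
  set H : ℝ → ℝ := fun r => π*r^2 - L*(r^2*Real.arccos (c/r) - c*Real.sqrt (r^2 - c^2)) with hH
  have hpart2 : ∫ r in c..W, h r = H W - H c := by
    apply intervalIntegral.integral_eq_sub_of_hasDeriv_right_of_le hcW.le
    · -- continuity of H on [c, W]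
      apply ContinuousOn.sub (continuousOn_const.mul (continuousOn_pow 2))
      apply ContinuousOn.mul continuousOn_const
      apply ContinuousOn.sub
      · exact (continuousOn_pow 2).mul (Real.continuous_arccos.comp_continuousOn
          (continuousOn_const.div continuousOn_id (fun x hx => (hc0.trans_le hx.1).ne')))
      · exact continuousOn_const.mul (((continuousOn_pow 2).sub continuousOn_const).sqrt)
    · intro x hx
      have hx0 : 0 < x := hc0.trans hx.1
      have hcx : c < x := hx.1
      have hxW : x < W := hx.2
      have hs0 : 0 < x^2 - c^2 := by nlinarith
      set s : ℝ := Real.sqrt (x^2 - c^2) with hs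
      have hspos : 0 < s := Real.sqrt_pos.mpr hs0
      have hcx1 : c/x < 1 := by rw [div_lt_one hx0]; exact hcx
      have hcx0 : (0:ℝ) < c/x := div_pos hc0 hx0
      have hu : HasDerivAt (fun r : ℝ => c/r) (c * (-(x^2)⁻¹)) x := by
        have := (hasDerivAt_inv hx0.ne').const_mul c
        simpa [div_eq_mul_inv] using this
      have hA : HasDerivAt (fun r => Real.arccos (c/r))
          (-(1/Real.sqrt (1 - (c/x)^2)) * (c * (-(x^2)⁻¹))) x :=
        (Real.hasDerivAt_arccos (by linarith) hcx1.ne).comp x hu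
      have hQin : HasDerivAt (fun r : ℝ => r^2 - c^2) (2*x) x := by
        have := (hasDerivAt_pow 2 x).sub_const (c^2)
        simpa using this
      have hQ : HasDerivAt (fun r => Real.sqrt (r^2 - c^2)) (1/(2*s) * (2*x)) x := by
        have := (Real.hasDerivAt_sqrt hs0.ne').comp x hQin
        simpa [hs, Function.comp_def] using this
      have h1 : HasDerivAt (fun r : ℝ => π*r^2) (π*(2*x)) x := by
        have := (hasDerivAt_pow 2 x).const_mul π
        simpa using this
      have h2 : HasDerivAt (fun r : ℝ => r^2 * Real.arccos (c/r))
          (2*x*Real.arccos (c/x) + x^2 * (-(1/Real.sqrt (1 - (c/x)^2)) * (c * (-(x^2)⁻¹)))) x := by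
        have := (hasDerivAt_pow 2 x).mul hA
        exact this.congr_deriv (by norm_num)
      have hHd : HasDerivAt H
          (π*(2*x) - L*((2*x*Real.arccos (c/x) + x^2 * (-(1/Real.sqrt (1 - (c/x)^2))
            * (c * (-(x^2)⁻¹)))) - c*(1/(2*s) * (2*x)))) x := by
        exact (h1.sub ((h2.sub (hQ.const_mul c)).const_mul (L:ℝ)))
      have hsqrt_eq : Real.sqrt (1 - (c/x)^2) = s / x := by
        have heq : 1 - (c/x)^2 = (x^2 - c^2)/x^2 := by field_simp
        rw [heq, hs, Real.sqrt_div hs0.le, Real.sqrt_sq hx0.le]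
      have hderiv_eq : (π*(2*x) - L*((2*x*Real.arccos (c/x) + x^2 * (-(1/Real.sqrt (1 - (c/x)^2))
            * (c * (-(x^2)⁻¹)))) - c*(1/(2*s) * (2*x)))) = h x := by
        rw [hsqrt_eq, hh]
        simp only
        field_simp
        ring
      rw [← hderiv_eq]
      exact hHd.hasDerivWithinAt
    · exact hii2
  rw [hpart1, hpart2]
  -- step 4: evaluate H
  have hsin_nonneg : 0 ≤ Real.sin (π/L) :=
    Real.sin_nonneg_of_nonneg_of_le_pi hπL.le (pi_div_le_pi hL)
  have hHc : H c = π * c^2 := by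
    rw [hH]
    simp only
    rw [div_self hc0.ne', Real.arccos_one, sub_self, Real.sqrt_zero]
    ring
  have hHW : H W = π * W^2 - (L:ℝ)*(W^2*(π/L) - c*(W*Real.sin (π/L))) := by
    rw [hH]
    simp only
    have h1 : c/W = Real.cos (π/L) := by rw [hc]; field_simp
    rw [h1, Real.arccos_cos hπL.le (pi_div_le_pi hL)]
    have h2 : W^2 - c^2 = (W*Real.sin (π/L))^2 := by
      have := Real.sin_sq_add_cos_sq (π/L)
      rw [hc]; nlinarith
    rw [h2, Real.sqrt_sq (by positivity)]
  rw [hHc, hHW]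
  have hsin2 : Real.sin (2*π/L) = 2 * Real.sin (π/L) * Real.cos (π/L) := by
    rw [show 2*π/(L:ℝ) = 2*(π/L) by ring, Real.sin_two_mul]
  rw [hsin2, hc]
  field_simp
  ring

lemma measurableSet_ES (L : ℕ) (W ε : ℝ) (S : Set ℝ) (hS : MeasurableSet S) :
    MeasurableSet {p : ℝ × ℝ | Real.sqrt (p.1^2 + p.2^2) ∈ S
        ∧ (∀ k : Fin L, p.1 * Real.cos (2*π*k/L) + p.2 * Real.sin (2*π*k/L)
            ≤ W * Real.cos (π/L))
        ∧ ε < Real.sqrt (p.1^2 + p.2^2)} := by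
  have hNmeas : Measurable (fun p : ℝ × ℝ => Real.sqrt (p.1^2 + p.2^2)) :=
    (continuous_fst.pow 2 |>.add (continuous_snd.pow 2)).sqrt.measurable
  have h1 : MeasurableSet {p : ℝ × ℝ | Real.sqrt (p.1^2 + p.2^2) ∈ S} := hNmeas hS
  have h2 : MeasurableSet {p : ℝ × ℝ |
      ∀ k : Fin L, p.1 * Real.cos (2*π*k/L) + p.2 * Real.sin (2*π*k/L)
        ≤ W * Real.cos (π/L)} := by
    rw [Set.setOf_forall]
    refine MeasurableSet.iInter fun k => ?_
    exact measurableSet_le (by fun_prop) measurable_const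
  have h3 : MeasurableSet {p : ℝ × ℝ | ε < Real.sqrt (p.1^2 + p.2^2)} :=
    measurableSet_lt measurable_const hNmeas
  have hdec : {p : ℝ × ℝ | Real.sqrt (p.1^2 + p.2^2) ∈ S
        ∧ (∀ k : Fin L, p.1 * Real.cos (2*π*k/L) + p.2 * Real.sin (2*π*k/L)
            ≤ W * Real.cos (π/L))
        ∧ ε < Real.sqrt (p.1^2 + p.2^2)}
      = {p : ℝ × ℝ | Real.sqrt (p.1^2 + p.2^2) ∈ S} ∩ ({p : ℝ × ℝ |
        ∀ k : Fin L, p.1 * Real.cos (2*π*k/L) + p.2 * Real.sin (2*π*k/L)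
          ≤ W * Real.cos (π/L)} ∩ {p : ℝ × ℝ | ε < Real.sqrt (p.1^2 + p.2^2)}) := by
    ext p
    simp only [mem_setOf_eq, mem_inter_iff]
    try tauto
  rw [hdec]
  exact h1.inter (h2.inter h3)


set_option maxHeartbeats 2000000 in
/-- Distance distribution from the center for a uniform point in a regular L-gon
(circumradius W, apothem W_p = W cos(π/L)) with a central disk of radius ε removed:
f_R(r) = 2πr/|A'| for ε ≤ r ≤ W_p and
f_R(r) = (2πr − 2Lr arccos(W_p/r))/|A'| for W_p ≤ r ≤ W,
where |A'| = (1/2) L W² sin(2π/L) − πε². -/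
theorem regular_polygon_distance_density (L : ℕ) (hL : 3 ≤ L) (W ε : ℝ)
    (hW : 0 < W) (hε : 0 < ε) (hεWp : ε < W * Real.cos (π / L)) :
    Measure.map (fun x => ‖x‖)
        ((volume (regPolyMinusDisk L W ε))⁻¹ • volume.restrict (regPolyMinusDisk L W ε))
      = volume.withDensity (fun r => ENNReal.ofReal (
          if ε ≤ r ∧ r ≤ W * Real.cos (π / L) then
            2 * π * r / (1 / 2 * L * W ^ 2 * Real.sin (2 * π / L) - π * ε ^ 2)
          else if W * Real.cos (π / L) ≤ r ∧ r ≤ W then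
            (2 * π * r - 2 * L * r * Real.arccos (W * Real.cos (π / L) / r))
              / (1 / 2 * L * W ^ 2 * Real.sin (2 * π / L) - π * ε ^ 2)
          else 0)) := by
  classical
  have hLpos : (0:ℝ) < L := by positivity
  have hL3 : (3:ℝ) ≤ (L:ℝ) := by exact_mod_cast hL
  have hπL : 0 < π / (L:ℝ) := div_pos pi_pos hLpos
  have hπL2 : π / (L:ℝ) < π / 2 := by
    rw [div_lt_div_iff₀ hLpos (by norm_num : (0:ℝ) < 2)]
    nlinarith [pi_pos]
  have hcosLpos : 0 < Real.cos (π/L) := by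
    apply Real.cos_pos_of_mem_Ioo
    constructor
    · linarith [pi_pos]
    · exact hπL2
  set c : ℝ := W * Real.cos (π / L) with hc
  have hc0 : 0 < c := by positivity
  have hεW : ε < W := by
    have h1 : Real.cos (π/L) < 1 := by
      have := Real.cos_lt_cos_of_nonneg_of_le_pi le_rfl (pi_div_le_pi hL) hπL
      rwa [Real.cos_zero] at this
    nlinarith
  set area : ℝ := 1 / 2 * L * W ^ 2 * Real.sin (2 * π / L) - π * ε ^ 2 with harea_def
  have hsin2 : Real.sin (2*π/L) = 2 * Real.sin (π/L) * Real.cos (π/L) := by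
    rw [show 2*π/(L:ℝ) = 2*(π/L) by ring, Real.sin_two_mul]
  have hareapos : 0 < area := by
    have htan := Real.lt_tan hπL hπL2
    rw [Real.tan_eq_sin_div_cos, lt_div_iff₀ hcosLpos] at htan
    have h4 := mul_lt_mul_of_pos_left htan
      (show (0:ℝ) < (L:ℝ)*W^2*Real.cos (π/L) by positivity)
    have h5 : (L:ℝ)*W^2*Real.cos (π/L) * (π/(L:ℝ) * Real.cos (π/L)) = π * c^2 := by
      rw [hc]; field_simp
    have key : π * c^2 < (L:ℝ)*W^2*(Real.sin (π/L) * Real.cos (π/L)) := by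
      rw [← h5]; nlinarith [h4]
    have h2 : π * ε^2 < π * c^2 := by nlinarith [pi_pos, mul_pos (sub_pos.mpr hεWp) (by linarith : (0:ℝ) < c + ε)]
    rw [harea_def, hsin2]
    nlinarith
  -- measure preserving transfer
  have hmp := (volume_preserving_finTwoArrow ℝ).comp
    (EuclideanSpace.volume_preserving_symm_measurableEquiv_toLp (Fin 2))
  have hnorm : ∀ x : EuclideanSpace ℝ (Fin 2), ‖x‖ = Real.sqrt ((x 0)^2 + (x 1)^2) := by
    intro x
    rw [EuclideanSpace.norm_eq, Fin.sum_univ_two, Real.norm_eq_abs, Real.norm_eq_abs,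
      sq_abs, sq_abs]
  have happ : ∀ x : EuclideanSpace ℝ (Fin 2),
      (⇑(MeasurableEquiv.finTwoArrow) ∘ ⇑(MeasurableEquiv.toLp 2 (Fin 2 → ℝ)).symm) x
        = ((x 0 : ℝ), (x 1 : ℝ)) := fun x => rfl
  -- main preimage identity
  have hpre : ∀ T : Set ℝ,
      (fun x : EuclideanSpace ℝ (Fin 2) => ‖x‖) ⁻¹' T ∩ regPolyMinusDisk L W ε
        = (⇑(MeasurableEquiv.finTwoArrow) ∘ ⇑(MeasurableEquiv.toLp 2 (Fin 2 → ℝ)).symm) ⁻¹'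
          {p : ℝ × ℝ | Real.sqrt (p.1^2 + p.2^2) ∈ T
            ∧ (∀ k : Fin L, p.1 * Real.cos (2*π*k/L) + p.2 * Real.sin (2*π*k/L) ≤ c)
            ∧ ε < Real.sqrt (p.1^2 + p.2^2)} := by
    intro T
    ext x
    simp only [Set.mem_inter_iff, Set.mem_preimage, happ x, mem_setOf_eq, regPolyMinusDisk,
      hnorm x]
    try tauto
  have hvol : ∀ T : Set ℝ, MeasurableSet T →
      volume ((fun x : EuclideanSpace ℝ (Fin 2) => ‖x‖) ⁻¹' T ∩ regPolyMinusDisk L W ε)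
        = ∫⁻ r in T, ENNReal.ofReal (gfun L W ε r) := by
    intro T hT
    rw [hpre T, hmp.measure_preimage (measurableSet_ES L W ε T hT).nullMeasurableSet]
    exact core_polar L hL W ε hW hε hεWp T hT
  have hA'vol : volume (regPolyMinusDisk L W ε) = ENNReal.ofReal area := by
    have := hvol univ MeasurableSet.univ
    rw [Set.preimage_univ, Set.univ_inter] at this
    rw [this, setLIntegral_univ, area_int L hL W ε hW hε hεWp]
  have hOFne : ENNReal.ofReal area ≠ 0 := (ENNReal.ofReal_pos.mpr hareapos).ne'
  have hinvne : (ENNReal.ofReal area)⁻¹ ≠ ⊤ := ENNReal.inv_ne_top.mpr hOFne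
  refine Measure.ext fun S hS => ?_
  rw [Measure.map_apply measurable_norm hS, Measure.smul_apply,
    Measure.restrict_apply (hS.preimage measurable_norm), hvol S hS, hA'vol, smul_eq_mul,
    withDensity_apply _ hS, ← lintegral_const_mul' _ _ hinvne]
  -- pointwise a.e. identity
  have hae : ∀ᵐ (r : ℝ) ∂volume, r ≠ ε := by
    rw [ae_iff]
    have : {a : ℝ | ¬ a ≠ ε} = {ε} := by ext a; simp
    rw [this]
    exact measure_singleton ε
  apply lintegral_congr_ae
  apply ae_restrict_of_ae
  filter_upwards [hae] with r hr
  have harea_div : ∀ x : ℝ, ENNReal.ofReal (x / area)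
      = (ENNReal.ofReal area)⁻¹ * ENNReal.ofReal x := by
    intro x
    rw [ENNReal.ofReal_div_of_pos hareapos, ENNReal.div_eq_inv_mul]
  rcases lt_trichotomy r ε with hrε | hrε | hrε
  · -- r < ε : both sides zero
    rw [gfun, if_neg (fun h2 => absurd h2.1 (not_lt.mpr hrε.le)),
      if_neg (fun h2 => absurd h2.1 (not_le.mpr hrε)),
      if_neg (fun h2 => absurd h2.1 (not_le.mpr (hrε.trans hεWp)))]
    simp
  · exact absurd hrε hr
  · -- ε < r
    rcases le_or_gt r c with hrc | hrc
    · -- ε < r ≤ c : first branch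
      have hrW : r ≤ W := hrc.trans (by nlinarith [Real.cos_le_one (π/L)])
      have hr0 : 0 < r := hε.trans hrε
      have harc : Real.arccos (c/r) = 0 :=
        Real.arccos_eq_zero.mpr (by rw [le_div_iff₀ hr0]; nlinarith)
      rw [if_pos ⟨hrε.le, hrc⟩, gfun, if_pos ⟨hrε, hrW⟩, harc, harea_div]
      congr 1
      ring
    · rcases le_or_gt r W with hrW | hrW
      · -- c < r ≤ W : second branch
        rw [if_neg (fun h2 => absurd h2.2 (not_le.mpr hrc)), if_pos ⟨hrc.le, hrW⟩,
          gfun, if_pos ⟨hrε, hrW⟩, harea_div]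
        congr 1
        rw [hc]
        ring
      · -- r > W : zero
        rw [gfun, if_neg (fun h2 => absurd h2.2 (not_le.mpr hrW)),
          if_neg (fun h2 => absurd h2.2 (not_le.mpr hrc)),
          if_neg (fun h2 => absurd h2.2 (not_le.mpr hrW))]
        simp
end

section
/- Let H be Gamma-distributed with integer shape m_h and rate m_h, and let R be uniformly-annulus-distributed on [ε, W] (density 2r/(W²−ε²)). Then for constants γ, P_S, α > 0 and nα ≠ 2, E[F_H(γR^α/P_S)·R^{-nα}] = (2/((W²−ε²)(2−nα))) · ( W^{2−nα} Γ(m_h, 0, m_h γ W^α/P_S)/Γ(m_h) − ε^{2−nα} Γ(m_h, 0, m_h γ ε^α/P_S)/Γ(m_h) − (m_h γ/P_S)^{n−2/α} Γ(m_h − n + 2/α, m_h γ ε^α/P_S, m_h γ W^α/P_S)/Γ(m_h) ), where Γ(a, x₁, x₂) = Γ(a, x₁) − Γ(a, x₂) is the generalized incomplete gamma function and F_H is the CDF of H. -/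
open MeasureTheory Real

/-- Upper incomplete gamma function Γ(a,x) = ∫_x^∞ t^{a-1} e^{-t} dt. -/
noncomputable def uGamma (a x : ℝ) : ℝ :=
  ∫ t in Set.Ioi x, t ^ (a - 1) * Real.exp (-t)

open Filter Asymptotics

lemma gcont {t : ℝ} (a : ℝ) (ht : t ≠ 0) :
    ContinuousAt (fun t : ℝ => t ^ (a - 1) * Real.exp (-t)) t :=
  (Real.continuousAt_rpow_const t _ (Or.inl ht)).mul
    ((Real.continuous_exp.comp continuous_neg).continuousAt)

lemma uGamma_integrableOn {x : ℝ} (hx : 0 < x) (a : ℝ) :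
    IntegrableOn (fun t : ℝ => t ^ (a - 1) * Real.exp (-t)) (Set.Ioi x) := by
  refine integrable_of_isBigO_exp_neg one_half_pos ?_ ?_
  · intro t ht
    exact (gcont a (lt_of_lt_of_le hx ht).ne').continuousWithinAt
  · have h2 : (fun t : ℝ => t ^ (a - 1) * Real.exp (-t)) =O[atTop]
        fun t => Real.exp (1 / 2 * t) * Real.exp (-t) :=
      (isLittleO_rpow_exp_pos_mul_atTop (a - 1) one_half_pos).isBigO.mul
        (isBigO_refl _ _)
    have h3 : (fun t : ℝ => Real.exp (1 / 2 * t) * Real.exp (-t))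
        = fun t => Real.exp (-(1 / 2) * t) := by
      funext t; rw [← Real.exp_add]; ring_nf
    rwa [h3] at h2

lemma uGamma_split {x y : ℝ} (hx : 0 < x) (hxy : x ≤ y) (a : ℝ) :
    uGamma a x = (∫ t in x..y, t ^ (a - 1) * Real.exp (-t)) + uGamma a y := by
  have hi := uGamma_integrableOn hx a
  have h := setIntegral_union (Set.Ioc_disjoint_Ioi le_rfl) measurableSet_Ioi
    (hi.mono_set Set.Ioc_subset_Ioi_self) (hi.mono_set (Set.Ioi_subset_Ioi hxy))
    (f := fun t : ℝ => t ^ (a - 1) * Real.exp (-t))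
  rw [Set.Ioc_union_Ioi_eq_Ioi hxy] at h
  rw [uGamma, uGamma, h, intervalIntegral.integral_of_le hxy]

lemma uGamma_hasDerivAt {x : ℝ} (hx : 0 < x) (a : ℝ) :
    HasDerivAt (uGamma a) (-(x ^ (a - 1) * Real.exp (-x))) x := by
  have hc : 0 < x / 2 := by positivity
  have hlt : x / 2 < x := half_lt_self hx
  have hev : uGamma a =ᶠ[nhds x]
      fun y => uGamma a (x / 2) - ∫ t in (x/2)..y, t ^ (a - 1) * Real.exp (-t) := by
    filter_upwards [eventually_gt_nhds hlt] with y hy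
    have h := uGamma_split hc hy.le a
    linarith
  have hint : IntervalIntegrable (fun t : ℝ => t ^ (a - 1) * Real.exp (-t))
      volume (x / 2) x :=
    (intervalIntegrable_iff_integrableOn_Ioc_of_le hlt.le).mpr
      ((uGamma_integrableOn hc a).mono_set Set.Ioc_subset_Ioi_self)
  have hmeas : StronglyMeasurableAtFilter
      (fun t : ℝ => t ^ (a - 1) * Real.exp (-t)) (nhds x) volume := by
    refine ContinuousAt.stronglyMeasurableAtFilter isOpen_Ioi
      (fun t ht => gcont a (ne_of_gt ht)) x hx
  have hD := (intervalIntegral.integral_hasDerivAt_right hint hmeas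
      (gcont a hx.ne')).const_sub (uGamma a (x / 2))
  exact hev.hasDerivAt_iff.mpr hD

lemma key_alg {c r : ℝ} (α : ℝ) (hc : 0 < c) (hr : 0 < r) (s : ℝ) :
    -((c * r ^ α) ^ (s - 1) * Real.exp (-(c * r ^ α))) * (c * (α * r ^ (α - 1)))
      = -(α * c ^ s * r ^ (α * s - 1) * Real.exp (-(c * r ^ α))) := by
  rw [Real.mul_rpow hc.le (Real.rpow_nonneg hr.le α), ← Real.rpow_mul hr.le,
    show c ^ s = c ^ (s - 1) * c by rw [← Real.rpow_add_one hc.ne', sub_add_cancel],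
    show r ^ (α * s - 1) = r ^ (α * (s - 1)) * r ^ (α - 1) by
      rw [← Real.rpow_add hr]; congr 1; ring]
  ring

/-- Disk (L = ∞) special case of eq. (25): for H Gamma(m_h, m_h) with CDF
F_H(x) = γ(m_h, m_h x)/Γ(m_h) and R uniformly-annulus distributed on [ε, W],
E[F_H(γR^α/P_S) R^{-nα}] equals the stated generalized-incomplete-gamma expression,
where Γ(a,x₁,x₂) = Γ(a,x₁) − Γ(a,x₂). -/
theorem threshold_moment_disk (mh n : ℕ) (hm : 1 ≤ mh) (hn : 1 ≤ n)
    (ε W γ PS α : ℝ)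
    (hε : 0 < ε) (hW : ε < W) (hγ : 0 < γ) (hPS : 0 < PS) (hα : 0 < α)
    (hne : (n:ℝ) * α ≠ 2) :
    ∫ r in ε..W,
        ((uGamma mh 0 - uGamma mh ((mh:ℝ) * (γ * r ^ α / PS))) / Real.Gamma mh)
          * r ^ (-((n:ℝ) * α)) * (2 * r / (W ^ 2 - ε ^ 2))
      = (2 / ((W ^ 2 - ε ^ 2) * (2 - (n:ℝ) * α)))
        * ( W ^ (2 - (n:ℝ) * α)
              * (uGamma mh 0 - uGamma mh ((mh:ℝ) * γ * W ^ α / PS)) / Real.Gamma mh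
          - ε ^ (2 - (n:ℝ) * α)
              * (uGamma mh 0 - uGamma mh ((mh:ℝ) * γ * ε ^ α / PS)) / Real.Gamma mh
          - ((mh:ℝ) * γ / PS) ^ ((n:ℝ) - 2 / α)
              * (uGamma ((mh:ℝ) - n + 2 / α) ((mh:ℝ) * γ * ε ^ α / PS)
                  - uGamma ((mh:ℝ) - n + 2 / α) ((mh:ℝ) * γ * W ^ α / PS))
              / Real.Gamma mh ) := by
  have hW0 : 0 < W := hε.trans hW
  have hmh0 : (0:ℝ) < (mh:ℝ) := by exact_mod_cast hm
  have hΓ : Real.Gamma (mh:ℝ) ≠ 0 := (Real.Gamma_pos_of_pos hmh0).ne'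
  have hWε : W ^ 2 - ε ^ 2 ≠ 0 := by nlinarith
  simp_rw [show ∀ r : ℝ, (mh:ℝ) * (γ * r ^ α / PS) = (mh:ℝ) * γ / PS * r ^ α from
    fun r => by ring]
  rw [show (mh:ℝ) * γ * W ^ α / PS = (mh:ℝ) * γ / PS * W ^ α from by ring,
      show (mh:ℝ) * γ * ε ^ α / PS = (mh:ℝ) * γ / PS * ε ^ α from by ring]
  set c : ℝ := (mh:ℝ) * γ / PS with hcdef
  have hc : 0 < c := by positivity
  set q : ℝ := (n:ℝ) * α with hqdef
  have hq2 : 2 - q ≠ 0 := fun h => hne (by rw [hqdef] at h; linarith)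
  set a : ℝ := (mh:ℝ) - (n:ℝ) + 2 / α with hadef
  set G : ℝ → ℝ := fun r =>
    2 / ((W ^ 2 - ε ^ 2) * (2 - q)) *
      (((uGamma (mh:ℝ) 0 - uGamma (mh:ℝ) (c * r ^ α)) * r ^ (2 - q)
          + c ^ ((n:ℝ) - 2 / α) * uGamma a (c * r ^ α)) / Real.Gamma (mh:ℝ))
    with hGdef
  have hderiv : ∀ r ∈ Set.uIcc ε W,
      HasDerivAt G
        (((uGamma (mh:ℝ) 0 - uGamma (mh:ℝ) (c * r ^ α)) / Real.Gamma (mh:ℝ))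
          * r ^ (-q) * (2 * r / (W ^ 2 - ε ^ 2))) r := by
    intro r hr
    rw [Set.uIcc_of_le hW.le] at hr
    have hr0 : 0 < r := lt_of_lt_of_le hε hr.1
    have hcr : 0 < c * r ^ α := by positivity
    have hu : HasDerivAt (fun r : ℝ => c * r ^ α) (c * (α * r ^ (α - 1))) r :=
      (Real.hasDerivAt_rpow_const (Or.inl hr0.ne')).const_mul c
    have hUm := (uGamma_hasDerivAt hcr (mh:ℝ)).comp r hu
    have hUa := (uGamma_hasDerivAt hcr a).comp r hu
    simp only [Function.comp_def] at hUm hUa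
    have hpow : HasDerivAt (fun r : ℝ => r ^ (2 - q)) ((2 - q) * r ^ (2 - q - 1)) r :=
      Real.hasDerivAt_rpow_const (Or.inl hr0.ne')
    have hG' : HasDerivAt G
        (2 / ((W ^ 2 - ε ^ 2) * (2 - q)) *
          ((((0 - -((c * r ^ α) ^ ((mh:ℝ) - 1) * Real.exp (-(c * r ^ α)))
                * (c * (α * r ^ (α - 1)))) * r ^ (2 - q)
              + (uGamma (mh:ℝ) 0 - uGamma (mh:ℝ) (c * r ^ α))
                * ((2 - q) * r ^ (2 - q - 1)))
            + c ^ ((n:ℝ) - 2 / α) *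
                (-((c * r ^ α) ^ (a - 1) * Real.exp (-(c * r ^ α)))
                  * (c * (α * r ^ (α - 1)))))
            / Real.Gamma (mh:ℝ))) r := by
      rw [hGdef]
      exact (((((hasDerivAt_const r _).sub hUm).mul hpow).add
        (hUa.const_mul _)).div_const _).const_mul _
    have e1 := key_alg α hc hr0 (mh:ℝ)
    have e2 := key_alg α hc hr0 a
    rw [e1, e2] at hG'
    have hcomb1 : r ^ (α * (mh:ℝ) - 1) * r ^ (2 - q) = r ^ (α * a - 1) := by
      rw [← Real.rpow_add hr0]
      congr 1
      rw [hadef, hqdef]; field_simp; ring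
    have hcomb2 : c ^ ((n:ℝ) - 2 / α) * c ^ a = c ^ (mh:ℝ) := by
      rw [← Real.rpow_add hc]
      congr 1
      rw [hadef]; ring
    have hsum : (0 - -(α * c ^ (mh:ℝ) * r ^ (α * (mh:ℝ) - 1) * Real.exp (-(c * r ^ α))))
          * r ^ (2 - q)
        + c ^ ((n:ℝ) - 2 / α) *
            -(α * c ^ a * r ^ (α * a - 1) * Real.exp (-(c * r ^ α))) = 0 := by
      calc _ = (c ^ (mh:ℝ) * (r ^ (α * (mh:ℝ) - 1) * r ^ (2 - q))
            - (c ^ ((n:ℝ) - 2 / α) * c ^ a) * r ^ (α * a - 1))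
            * (α * Real.exp (-(c * r ^ α))) := by ring
        _ = 0 := by rw [hcomb1, hcomb2]; ring
    have hcomb3 : r ^ (2 - q - 1) = r ^ (-q) * r := by
      rw [show 2 - q - 1 = -q + 1 from by ring, Real.rpow_add_one hr0.ne']
    have heq : 2 / ((W ^ 2 - ε ^ 2) * (2 - q)) *
          ((((0 - -(α * c ^ (mh:ℝ) * r ^ (α * (mh:ℝ) - 1) * Real.exp (-(c * r ^ α))))
                * r ^ (2 - q)
              + (uGamma (mh:ℝ) 0 - uGamma (mh:ℝ) (c * r ^ α))
                * ((2 - q) * r ^ (2 - q - 1)))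
            + c ^ ((n:ℝ) - 2 / α) *
                (-(α * c ^ a * r ^ (α * a - 1) * Real.exp (-(c * r ^ α)))))
            / Real.Gamma (mh:ℝ))
        = ((uGamma (mh:ℝ) 0 - uGamma (mh:ℝ) (c * r ^ α)) / Real.Gamma (mh:ℝ))
            * r ^ (-q) * (2 * r / (W ^ 2 - ε ^ 2)) := by
      have h1 : 2 / ((W ^ 2 - ε ^ 2) * (2 - q)) *
          ((((0 - -(α * c ^ (mh:ℝ) * r ^ (α * (mh:ℝ) - 1) * Real.exp (-(c * r ^ α))))
                * r ^ (2 - q)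
              + (uGamma (mh:ℝ) 0 - uGamma (mh:ℝ) (c * r ^ α))
                * ((2 - q) * r ^ (2 - q - 1)))
            + c ^ ((n:ℝ) - 2 / α) *
                (-(α * c ^ a * r ^ (α * a - 1) * Real.exp (-(c * r ^ α)))))
            / Real.Gamma (mh:ℝ))
          = 2 / ((W ^ 2 - ε ^ 2) * (2 - q)) *
            ((uGamma (mh:ℝ) 0 - uGamma (mh:ℝ) (c * r ^ α))
              * ((2 - q) * r ^ (2 - q - 1)) / Real.Gamma (mh:ℝ)) := by
        linear_combination (2 / ((W ^ 2 - ε ^ 2) * (2 - q)) / Real.Gamma (mh:ℝ)) * hsum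
      rw [h1, hcomb3]
      field_simp
    rwa [heq] at hG'
  have hint : IntervalIntegrable (fun r : ℝ =>
      ((uGamma (mh:ℝ) 0 - uGamma (mh:ℝ) (c * r ^ α)) / Real.Gamma (mh:ℝ))
        * r ^ (-q) * (2 * r / (W ^ 2 - ε ^ 2))) volume ε W := by
    apply ContinuousOn.intervalIntegrable
    intro r hr
    rw [Set.uIcc_of_le hW.le] at hr
    have hr0 : 0 < r := lt_of_lt_of_le hε hr.1
    have hcr : 0 < c * r ^ α := by positivity
    have hu : HasDerivAt (fun r : ℝ => c * r ^ α) (c * (α * r ^ (α - 1))) r :=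
      (Real.hasDerivAt_rpow_const (Or.inl hr0.ne')).const_mul c
    have hUm := ((uGamma_hasDerivAt hcr (mh:ℝ)).comp r hu).continuousAt
    simp only [Function.comp_def] at hUm
    exact ((((continuousAt_const.sub hUm).div_const _).mul
      (Real.continuousAt_rpow_const r _ (Or.inl hr0.ne'))).mul
      (by fun_prop)).continuousWithinAt
  rw [intervalIntegral.integral_eq_sub_of_hasDerivAt hderiv hint, hGdef]
  simp only
  field_simp
  ring
end
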